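/- Let R be a filtered λ-ring structure on ℤ[x]/(x⁴) such that the linear coefficient of ψ_2^R(x) is 0. Then ψ_p^R(x) = c_p x² + d_p x³ for some integers c_p, d_p for every prime p (i.e., every ψ_p^R(x) has zero linear coefficient). Conversely, any family of polynomials ψ_p(x) = c_p x² + d_p x³ satisfying ψ_p(x) ≡ x^p (mod p) for all primes p defines a filtered λ-ring structure on ℤ[x]/(x⁴). Two such structures S((c_p), (d_p)) and S((c̄_p), (d̄_p)) are isomorphic if and only if (i) there exists u ∈ {1, −1} with c_p = u·c̄_p for all primes p, and (ii) there exists an integer α such that d̄_p = d_p + 2c_p·α for all primes p. -/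

import Mathlib

open Polynomial

noncomputable section

/-- The truncated polynomial ring `ℤ[x]/(xⁿ)`. -/
abbrev TP (n : ℕ) : Type := Polynomial ℤ ⧸ Ideal.span {(X : Polynomial ℤ) ^ n}

/-- The class of `x` in `ℤ[x]/(xⁿ)`. -/
def xx (n : ℕ) : TP n := Ideal.Quotient.mk _ (X : Polynomial ℤ)

/-- A filtered λ-ring structure on `ℤ[x]/(xⁿ)`, presented (via Wilkerson's theorem) as a
family of Adams operations `ψ p`, indexed by the primes `p`: each `ψ p` is a ring
endomorphism preserving the filtration ideal `(x)`, they pairwise commute, and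
`ψ p r ≡ r ^ p (mod p)`. -/
structure AdamsFamily (n : ℕ) : Type where
  ψ : Nat.Primes → (TP n →+* TP n)
  maps_ideal : ∀ (p : Nat.Primes), ∀ a ∈ Ideal.span {xx n}, ψ p a ∈ Ideal.span {xx n}
  comm : ∀ p q : Nat.Primes, (ψ p).comp (ψ q) = (ψ q).comp (ψ p)
  frob : ∀ (p : Nat.Primes) (a : TP n),
    ψ p a - a ^ (p : ℕ) ∈ Ideal.span {((p : ℕ) : TP n)}

/-- Isomorphism of filtered λ-ring structures on `ℤ[x]/(xⁿ)`: a filtration-preserving ring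
automorphism intertwining the Adams operations. -/
def AdamsIso {n : ℕ} (R S : AdamsFamily n) : Prop :=
  ∃ σ : TP n ≃+* TP n,
    (Ideal.span {xx n}).map σ.toRingHom = Ideal.span {xx n} ∧
    ∀ p : Nat.Primes, σ.toRingHom.comp (R.ψ p) = (S.ψ p).comp σ.toRingHom

/-- The prime 2 as an element of `Nat.Primes`. -/
def P2 : Nat.Primes := ⟨2, Nat.prime_two⟩

/-- The prime 3 as an element of `Nat.Primes`. -/
def P3 : Nat.Primes := ⟨3, Nat.prime_three⟩

abbrev mk4 : Polynomial ℤ →+* TP 4 := Ideal.Quotient.mk (Ideal.span {(X : Polynomial ℤ) ^ 4})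

def po (a b c d : ℤ) : Polynomial ℤ := C a + C b * X + C c * X ^ 2 + C d * X ^ 3

lemma po_coeff (a b c d : ℤ) (i : ℕ) :
    (po a b c d).coeff i = if i = 0 then a else if i = 1 then b else
      if i = 2 then c else if i = 3 then d else 0 := by
  simp only [po, coeff_add, coeff_C_mul, coeff_X_pow, coeff_C, coeff_X]
  rcases Nat.lt_or_ge i 4 with h | h
  · interval_cases i <;> norm_num
  · rw [if_neg (by omega), if_neg (by omega), if_neg (by omega), if_neg (by omega),
      if_neg (by omega), if_neg (by omega), if_neg (by omega), if_neg (by omega)]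
    ring
lemma po_coeff0 (a b c d : ℤ) : (po a b c d).coeff 0 = a := by simp [po_coeff]
lemma po_coeff1 (a b c d : ℤ) : (po a b c d).coeff 1 = b := by simp [po_coeff]
lemma po_coeff2 (a b c d : ℤ) : (po a b c d).coeff 2 = c := by simp [po_coeff]
lemma po_coeff3 (a b c d : ℤ) : (po a b c d).coeff 3 = d := by simp [po_coeff]

lemma mk_po_eq_iff {a b c d a' b' c' d' : ℤ} :
    mk4 (po a b c d) = mk4 (po a' b' c' d') ↔ a = a' ∧ b = b' ∧ c = c' ∧ d = d' := by
  rw [Ideal.Quotient.eq, Ideal.mem_span_singleton]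
  rw [Polynomial.X_pow_dvd_iff]
  constructor
  · intro h
    refine ⟨?_, ?_, ?_, ?_⟩
    · have := h 0 (by norm_num); simpa [po_coeff0, sub_eq_zero] using this
    · have := h 1 (by norm_num); simpa [po_coeff1, sub_eq_zero] using this
    · have := h 2 (by norm_num); simpa [po_coeff2, sub_eq_zero] using this
    · have := h 3 (by norm_num); simpa [po_coeff3, sub_eq_zero] using this
  · rintro ⟨rfl, rfl, rfl, rfl⟩ i hi; simp

lemma surj_po (t : TP 4) : ∃ a b c d : ℤ, t = mk4 (po a b c d) := by
  obtain ⟨g, rfl⟩ := Ideal.Quotient.mk_surjective t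
  refine ⟨g.coeff 0, g.coeff 1, g.coeff 2, g.coeff 3, ?_⟩
  rw [show (Ideal.Quotient.mk (Ideal.span {(X : Polynomial ℤ) ^ 4}) g) = mk4 g from rfl,
    Ideal.Quotient.eq, Ideal.mem_span_singleton, Polynomial.X_pow_dvd_iff]
  intro i hi
  interval_cases i <;> simp [po_coeff]

lemma po_eq_po {a b c d a' b' c' d' : ℤ} (h1 : a = a') (h2 : b = b') (h3 : c = c')
    (h4 : d = d') : mk4 (po a b c d) = mk4 (po a' b' c' d') := by
  rw [h1, h2, h3, h4]

lemma mul_po (a b c d a' b' c' d' : ℤ) :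
    mk4 (po a b c d) * mk4 (po a' b' c' d') =
      mk4 (po (a * a') (a * b' + b * a') (a * c' + b * b' + c * a')
        (a * d' + b * c' + c * b' + d * a')) := by
  rw [← map_mul, Ideal.Quotient.eq, Ideal.mem_span_singleton]
  refine ⟨C (b * d' + c * c' + d * b') + C (c * d' + d * c') * X + C (d * d') * X ^ 2, ?_⟩
  simp only [po, map_add, map_mul]
  ring

lemma add_po (a b c d a' b' c' d' : ℤ) :
    mk4 (po a b c d) + mk4 (po a' b' c' d') =
      mk4 (po (a + a') (b + b') (c + c') (d + d')) := by
  rw [← map_add]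
  congr 1
  simp only [po, map_add]; ring

lemma sq_po (a b c d : ℤ) :
    mk4 (po a b c d) ^ 2 = mk4 (po (a ^ 2) (2 * a * b) (2 * a * c + b ^ 2)
      (2 * a * d + 2 * b * c)) := by
  rw [sq, mul_po]; exact po_eq_po (by ring) (by ring) (by ring) (by ring)

lemma cube_po (a b c d : ℤ) :
    mk4 (po a b c d) ^ 3 = mk4 (po (a ^ 3) (3 * a ^ 2 * b) (3 * a ^ 2 * c + 3 * a * b ^ 2)
      (3 * a ^ 2 * d + 6 * a * b * c + b ^ 3)) := by
  rw [pow_succ, sq_po, mul_po]; exact po_eq_po (by ring) (by ring) (by ring) (by ring)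

lemma xx_po : xx 4 = mk4 (po 0 1 0 0) := by
  unfold xx; congr 1; simp [po]

lemma cast_po (m : ℤ) : (m : TP 4) = mk4 (po m 0 0 0) := by
  rw [show ((m : TP 4)) = mk4 ((m : Polynomial ℤ)) from (map_intCast mk4 m).symm]
  congr 1; simp [po]

lemma cxx (c d : ℤ) : (c : TP 4) * xx 4 ^ 2 + (d : TP 4) * xx 4 ^ 3 = mk4 (po 0 0 c d) := by
  rw [xx_po, sq_po, cube_po, cast_po c, cast_po d, mul_po, mul_po, add_po]
  exact po_eq_po (by ring) (by ring) (by ring) (by ring)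

lemma zero_po : (0 : TP 4) = mk4 (po 0 0 0 0) := by
  rw [← map_zero mk4]; congr 1; simp [po]

lemma mem_xx_iff {a b c d : ℤ} :
    mk4 (po a b c d) ∈ Ideal.span {xx 4} ↔ a = 0 := by
  rw [Ideal.mem_span_singleton]
  constructor
  · rintro ⟨t, ht⟩
    obtain ⟨a', b', c', d', rfl⟩ := surj_po t
    rw [xx_po, mul_po] at ht
    exact ((mk_po_eq_iff.mp ht).1).trans (by ring)
  · rintro rfl
    exact ⟨mk4 (po b c d 0), by rw [xx_po, mul_po]; exact po_eq_po (by ring) (by ring) (by ring) (by ring)⟩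

lemma mem_xx2_iff {a b c d : ℤ} :
    mk4 (po a b c d) ∈ Ideal.span {xx 4 ^ 2} ↔ a = 0 ∧ b = 0 := by
  rw [Ideal.mem_span_singleton, xx_po, sq_po]
  constructor
  · rintro ⟨t, ht⟩
    obtain ⟨a', b', c', d', rfl⟩ := surj_po t
    rw [mul_po] at ht
    obtain ⟨h1, h2, -, -⟩ := mk_po_eq_iff.mp ht
    exact ⟨h1.trans (by ring), h2.trans (by ring)⟩
  · rintro ⟨rfl, rfl⟩
    exact ⟨mk4 (po c d 0 0), by rw [mul_po]; exact po_eq_po (by ring) (by ring) (by ring) (by ring)⟩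

lemma mem_p_iff {a b c d : ℤ} {m : ℕ} :
    mk4 (po a b c d) ∈ Ideal.span {((m : ℕ) : TP 4)} ↔
      (m : ℤ) ∣ a ∧ (m : ℤ) ∣ b ∧ (m : ℤ) ∣ c ∧ (m : ℤ) ∣ d := by
  rw [Ideal.mem_span_singleton,
    show ((m : TP 4)) = ((m : ℤ) : TP 4) by push_cast; ring, cast_po]
  constructor
  · rintro ⟨t, ht⟩
    obtain ⟨a', b', c', d', rfl⟩ := surj_po t
    rw [mul_po] at ht
    obtain ⟨h1, h2, h3, h4⟩ := mk_po_eq_iff.mp ht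
    exact ⟨⟨a', h1.trans (by ring)⟩, ⟨b', h2.trans (by ring)⟩,
      ⟨c', h3.trans (by ring)⟩, ⟨d', h4.trans (by ring)⟩⟩
  · rintro ⟨⟨a', rfl⟩, ⟨b', rfl⟩, ⟨c', rfl⟩, ⟨d', rfl⟩⟩
    exact ⟨mk4 (po a' b' c' d'), by rw [mul_po]; exact po_eq_po (by ring) (by ring) (by ring) (by ring)⟩

lemma sub_po (a b c d a' b' c' d' : ℤ) :
    mk4 (po a b c d) - mk4 (po a' b' c' d') =
      mk4 (po (a - a') (b - b') (c - c') (d - d')) := by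
  rw [← map_sub]; congr 1; simp only [po, map_sub]; ring

lemma hom_ext {A : Type} [CommRing A] {f g : TP 4 →+* A} (h : f (xx 4) = g (xx 4)) :
    f = g := by
  apply Ideal.Quotient.ringHom_ext
  apply Polynomial.ringHom_ext
  · intro a
    simp only [RingHom.comp_apply]
    rw [show ((C a : Polynomial ℤ)) = ((a : ℤ) : Polynomial ℤ) by simp, map_intCast, map_intCast,
      map_intCast]
  · exact h

lemma hom_mk {A : Type} [CommRing A] (f : TP 4 →+* A) (g : Polynomial ℤ) :
    f (mk4 g) = Polynomial.eval₂ (Int.castRingHom A) (f (xx 4)) g := by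
  have : f.comp mk4 = Polynomial.eval₂RingHom (Int.castRingHom A) (f (xx 4)) := by
    apply Polynomial.ringHom_ext
    · intro a
      simp only [RingHom.comp_apply, coe_eval₂RingHom, eval₂_C]
      rw [show ((C a : Polynomial ℤ)) = ((a : ℤ) : Polynomial ℤ) by simp, map_intCast, map_intCast]
      simp
    · simp only [RingHom.comp_apply, coe_eval₂RingHom, eval₂_X]
      rfl
  calc f (mk4 g) = (f.comp mk4) g := rfl
  _ = _ := by rw [this]; simp

lemma comp_po {f : TP 4 →+* TP 4} {B C D : ℤ} (hf : f (xx 4) = mk4 (po 0 B C D))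
    (a b c d : ℤ) :
    f (mk4 (po a b c d)) = mk4 (po a (b * B) (b * C + c * B ^ 2)
      (b * D + 2 * c * B * C + d * B ^ 3)) := by
  have eval₂_po : ∀ (t : TP 4), Polynomial.eval₂ (Int.castRingHom (TP 4)) t (po a b c d) =
      (a : TP 4) + (b : TP 4) * t + (c : TP 4) * t ^ 2 + (d : TP 4) * t ^ 3 := by
    intro t
    simp only [po, eval₂_add, eval₂_mul, eval₂_C, eval₂_X, eval₂_pow, eval₂_X_pow]
    simp only [eq_intCast]
  rw [hom_mk, hf, eval₂_po]
  rw [cast_po a, cast_po b, cast_po c, cast_po d, sq_po, cube_po, mul_po, mul_po, mul_po,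
    add_po, add_po, add_po]
  exact po_eq_po (by ring) (by ring) (by ring) (by ring)

lemma pow4_mem (b c d : ℤ) : (po 0 b c d) ^ 4 ∈ Ideal.span {(X : Polynomial ℤ) ^ 4} := by
  rw [Ideal.mem_span_singleton]
  have : (po 0 b c d) = X * (C b + C c * X + C d * X ^ 2) := by
    simp only [po, map_zero]; ring
  rw [this, mul_pow]
  exact Dvd.intro _ rfl

/-- The substitution endomorphism `x ↦ b x + c x² + d x³`. -/
def subh (b c d : ℤ) : TP 4 →+* TP 4 :=
  Ideal.Quotient.lift (Ideal.span {(X : Polynomial ℤ) ^ 4})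
    (Polynomial.eval₂RingHom (Int.castRingHom (TP 4)) (mk4 (po 0 b c d)))
    (by
      intro g hg
      rw [Ideal.mem_span_singleton] at hg
      obtain ⟨r, rfl⟩ := hg
      simp only [coe_eval₂RingHom, eval₂_mul, eval₂_X_pow]
      rw [show (mk4 (po 0 b c d)) ^ 4 = mk4 ((po 0 b c d) ^ 4) from (map_pow mk4 _ _).symm]
      rw [Ideal.Quotient.eq_zero_iff_mem.mpr (pow4_mem b c d)]
      ring)

lemma subh_xx (b c d : ℤ) : subh b c d (xx 4) = mk4 (po 0 b c d) := by
  show Ideal.Quotient.lift _ _ _ (mk4 X) = _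
  rw [Ideal.Quotient.lift_mk]
  simp

lemma xpow_prime (p : ℕ) (hp : 2 ≤ p) : ∃ e2 e3 : ℤ, xx 4 ^ p = mk4 (po 0 0 e2 e3) := by
  rcases Nat.lt_or_ge p 4 with h | h
  · interval_cases p
    · exact ⟨1, 0, by rw [xx_po, sq_po]; exact po_eq_po rfl rfl (by ring) (by ring)⟩
    · exact ⟨0, 1, by rw [xx_po, cube_po]; exact po_eq_po rfl rfl (by ring) (by ring)⟩
  · refine ⟨0, 0, ?_⟩
    have : xx 4 ^ p = mk4 (X ^ p) := (map_pow mk4 X p).symm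
    rw [this, ← zero_po, Ideal.Quotient.eq_zero_iff_mem]
    rw [Ideal.mem_span_singleton]
    exact pow_dvd_pow X h

/-- Every Adams operation sends `x` into `(x)`, so has zero constant term. -/
lemma psi_xx_form (R : AdamsFamily 4) (p : Nat.Primes) :
    ∃ b c d : ℤ, R.ψ p (xx 4) = mk4 (po 0 b c d) := by
  have hx : xx 4 ∈ Ideal.span {xx 4} := Ideal.subset_span rfl
  have h := R.maps_ideal p _ hx
  obtain ⟨a, b, c, d, he⟩ := surj_po (R.ψ p (xx 4))
  rw [he] at h
  rw [mem_xx_iff] at h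
  exact ⟨b, c, d, by rw [he, h]⟩

lemma part1 (R : AdamsFamily 4) (h2 : R.ψ P2 (xx 4) ∈ Ideal.span {xx 4 ^ 2}) :
    ∀ p : Nat.Primes, ∃ c d : ℤ,
      R.ψ p (xx 4) = (c : TP 4) * xx 4 ^ 2 + (d : TP 4) * xx 4 ^ 3 := by
  -- representation of ψ₂ x
  obtain ⟨e1, e2, e3, h2e⟩ := psi_xx_form R P2
  have h2' : e1 = 0 := by
    rw [h2e] at h2
    exact (mem_xx2_iff.mp h2).2
  subst h2'
  -- e2 is odd
  have hfrob2 := R.frob P2 (xx 4)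
  have he2 : e2 ≠ 0 := by
    have hx2 : xx 4 ^ ((P2 : ℕ)) = mk4 (po 0 0 1 0) := by
      show xx 4 ^ 2 = _
      rw [xx_po, sq_po]; exact po_eq_po rfl rfl (by ring) (by ring)
    rw [h2e, hx2, sub_po] at hfrob2
    have h := (mem_p_iff.mp hfrob2).2.2.1
    have h2' : ((P2 : ℕ) : ℤ) = 2 := rfl
    rw [h2'] at h
    intro h0
    rw [h0] at h
    omega
  intro p
  obtain ⟨b, c, d, hpe⟩ := psi_xx_form R p
  -- p divides b  (from the Frobenius congruence)
  have hpge : 2 ≤ (p : ℕ) := p.2.two_le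
  obtain ⟨f2, f3, hxp⟩ := xpow_prime (p : ℕ) hpge
  have hfrobp := R.frob p (xx 4)
  rw [hpe, hxp, sub_po] at hfrobp
  have hpb : ((p : ℕ) : ℤ) ∣ b := by
    have := (mem_p_iff.mp hfrobp).2.1
    simpa using this
  -- commutation with ψ₂ : compute both sides on x
  have hcomm := congrArg (fun f : TP 4 →+* TP 4 => f (xx 4)) (R.comm P2 p)
  simp only [RingHom.comp_apply] at hcomm
  rw [h2e, hpe, comp_po h2e, comp_po hpe] at hcomm
  obtain ⟨-, -, hc2, -⟩ := mk_po_eq_iff.mp hcomm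
  have hb01 : b = 0 ∨ b = 1 := by
    have : e2 * (b * (b - 1)) = 0 := by linarith [hc2]
    rcases mul_eq_zero.mp this with h | h
    · exact absurd h he2
    · rcases mul_eq_zero.mp h with h | h
      · exact Or.inl h
      · exact Or.inr (by omega)
  have hb : b = 0 := by
    rcases hb01 with h | h
    · exact h
    · exfalso
      rw [h] at hpb
      have h1 : ((p : ℕ) : ℤ) ≤ 1 := Int.le_of_dvd one_pos hpb
      have : (2 : ℤ) ≤ ((p : ℕ) : ℤ) := by exact_mod_cast hpge
      omega
  subst hb
  exact ⟨c, d, by rw [hpe, cxx]⟩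

lemma part2 (c d : Nat.Primes → ℤ)
    (hcong : ∀ p : Nat.Primes,
      (c p : TP 4) * xx 4 ^ 2 + (d p : TP 4) * xx 4 ^ 3 - xx 4 ^ (p : ℕ)
        ∈ Ideal.span {((p : ℕ) : TP 4)}) :
    ∃ S : AdamsFamily 4, ∀ p : Nat.Primes,
      S.ψ p (xx 4) = (c p : TP 4) * xx 4 ^ 2 + (d p : TP 4) * xx 4 ^ 3 := by
  refine ⟨⟨fun p => subh 0 (c p) (d p), ?_, ?_, ?_⟩, ?_⟩
  · -- maps_ideal
    intro p a ha
    obtain ⟨a0, b0, c0, d0, rfl⟩ := surj_po a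
    have h0 : a0 = 0 := mem_xx_iff.mp ha
    subst h0
    rw [comp_po (subh_xx 0 (c p) (d p))]
    exact mem_xx_iff.mpr rfl
  · -- comm
    intro p q
    apply hom_ext
    simp only [RingHom.comp_apply]
    rw [subh_xx, comp_po (subh_xx 0 (c p) (d p)), subh_xx,
      comp_po (subh_xx 0 (c q) (d q))]
    exact po_eq_po rfl (by ring) (by ring) (by ring)
  · -- frob
    intro p a
    set J : Ideal (TP 4) := Ideal.span {((p : ℕ) : TP 4)} with hJ
    have hcharP : CharP (TP 4 ⧸ J) (p : ℕ) := by
      constructor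
      intro m
      have h1 : ((m : ℕ) : TP 4 ⧸ J) = Ideal.Quotient.mk J ((m : TP 4)) := by
        rw [map_natCast]
      rw [h1, Ideal.Quotient.eq_zero_iff_mem]
      have h2 : ((m : TP 4)) = mk4 (po (m : ℤ) 0 0 0) := by
        rw [show ((m : TP 4)) = (((m : ℤ) : TP 4)) by push_cast; ring, cast_po]
      rw [h2, hJ, mem_p_iff]
      constructor
      · rintro ⟨h, -⟩; exact_mod_cast h
      · intro h; exact ⟨by exact_mod_cast h, ⟨0, by ring⟩, ⟨0, by ring⟩, ⟨0, by ring⟩⟩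
    haveI := hcharP
    haveI : Fact ((p : ℕ)).Prime := ⟨p.2⟩
    let π : TP 4 →+* TP 4 ⧸ J := Ideal.Quotient.mk J
    have key : π.comp (subh 0 (c p) (d p)) = (frobenius (TP 4 ⧸ J) (p : ℕ)).comp π := by
      refine hom_ext (A := TP 4 ⧸ J) ?_
      simp only [RingHom.comp_apply]
      rw [subh_xx]
      show π _ = frobenius _ _ (π (xx 4))
      rw [frobenius_def, ← map_pow]
      rw [Ideal.Quotient.mk_eq_mk_iff_sub_mem]
      have := hcong p
      rwa [cxx] at this
    have hk := RingHom.congr_fun key a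
    simp only [RingHom.comp_apply] at hk
    rw [frobenius_def, ← map_pow] at hk
    rw [← Ideal.Quotient.mk_eq_mk_iff_sub_mem]
    exact hk
  · intro p
    show subh 0 (c p) (d p) (xx 4) = _
    rw [subh_xx, cxx]

lemma map_span_xx (σ : TP 4 ≃+* TP 4) :
    (Ideal.span {xx 4}).map σ.toRingHom = Ideal.span {σ.toRingHom (xx 4)} := by
  rw [Ideal.map_span, Set.image_singleton]

lemma part3_fwd (c d cb db : Nat.Primes → ℤ) (S Sb : AdamsFamily 4)
    (hS : ∀ p : Nat.Primes, S.ψ p (xx 4) = (c p : TP 4) * xx 4 ^ 2 + (d p : TP 4) * xx 4 ^ 3)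
    (hSb : ∀ p : Nat.Primes, Sb.ψ p (xx 4) = (cb p : TP 4) * xx 4 ^ 2 + (db p : TP 4) * xx 4 ^ 3)
    (h : AdamsIso S Sb) :
    (∃ u : ℤ, (u = 1 ∨ u = -1) ∧ ∀ p : Nat.Primes, c p = u * cb p) ∧
    (∃ α : ℤ, ∀ p : Nat.Primes, db p = d p + 2 * c p * α) := by
  obtain ⟨σ, hI, hcm⟩ := h
  rw [map_span_xx] at hI
  -- σ x = u x + v x² + w x³
  have hmem : σ.toRingHom (xx 4) ∈ Ideal.span {xx 4} := by
    rw [← hI]; exact Ideal.subset_span rfl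
  obtain ⟨a0, u, v, w, hσx⟩ := surj_po (σ.toRingHom (xx 4))
  have ha0 : a0 = 0 := by rw [hσx] at hmem; exact mem_xx_iff.mp hmem
  subst ha0
  -- u is a unit
  have hxmem : xx 4 ∈ Ideal.span {σ.toRingHom (xx 4)} := by
    rw [hI]; exact Ideal.subset_span rfl
  obtain ⟨r, hr⟩ := Ideal.mem_span_singleton.mp hxmem
  obtain ⟨r0, r1, r2, r3, hr'⟩ := surj_po r
  rw [hσx, hr', mul_po, xx_po] at hr
  obtain ⟨-, h1, -, -⟩ := mk_po_eq_iff.mp hr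
  have hu1 : u * r0 = 1 := by linarith [h1]
  have hu : u = 1 ∨ u = -1 := Int.isUnit_iff.mp (IsUnit.of_mul_eq_one (a := u) r0 hu1)
  have hu2 : u * u = 1 := by rcases hu with rfl | rfl <;> norm_num
  -- intertwining at x
  have key : ∀ p : Nat.Primes,
      c p * u ^ 2 = u * cb p ∧ 2 * c p * u * v + d p * u ^ 3 = u * db p := by
    intro p
    have hc := RingHom.congr_fun (hcm p) (xx 4)
    simp only [RingHom.comp_apply] at hc
    have hSp : S.ψ p (xx 4) = mk4 (po 0 0 (c p) (d p)) := by rw [hS p, cxx]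
    have hSbp : Sb.ψ p (xx 4) = mk4 (po 0 0 (cb p) (db p)) := by rw [hSb p, cxx]
    rw [hSp, hσx, comp_po hσx, comp_po hSbp] at hc
    obtain ⟨-, -, h3, h4⟩ := mk_po_eq_iff.mp hc
    constructor
    · linarith [h3]
    · linarith [h4]
  constructor
  · refine ⟨u, hu, fun p => ?_⟩
    have := (key p).1
    rcases hu with rfl | rfl <;> linarith [this]
  · refine ⟨v, fun p => ?_⟩
    have h2 := (key p).2
    rcases hu with rfl | rfl <;> nlinarith [h2]

lemma part3_bwd (c d cb db : Nat.Primes → ℤ) (S Sb : AdamsFamily 4)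
    (hS : ∀ p : Nat.Primes, S.ψ p (xx 4) = (c p : TP 4) * xx 4 ^ 2 + (d p : TP 4) * xx 4 ^ 3)
    (hSb : ∀ p : Nat.Primes, Sb.ψ p (xx 4) = (cb p : TP 4) * xx 4 ^ 2 + (db p : TP 4) * xx 4 ^ 3)
    (u : ℤ) (hu : u = 1 ∨ u = -1) (hc : ∀ p : Nat.Primes, c p = u * cb p)
    (α : ℤ) (hα : ∀ p : Nat.Primes, db p = d p + 2 * c p * α) :
    AdamsIso S Sb := by
  have hu2 : u * u = 1 := by rcases hu with rfl | rfl <;> norm_num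
  have hfg : (subh u α 0).comp (subh u (-(u * α)) (2 * α ^ 2 * u)) = RingHom.id (TP 4) := by
    apply hom_ext
    simp only [RingHom.comp_apply, RingHom.id_apply]
    rw [subh_xx, comp_po (subh_xx u α 0), xx_po]
    exact po_eq_po rfl (by linarith [hu2]) (by rcases hu with rfl | rfl <;> ring)
      (by rcases hu with rfl | rfl <;> ring)
  have hgf : (subh u (-(u * α)) (2 * α ^ 2 * u)).comp (subh u α 0) = RingHom.id (TP 4) := by
    apply hom_ext
    simp only [RingHom.comp_apply, RingHom.id_apply]
    rw [subh_xx, comp_po (subh_xx u (-(u * α)) (2 * α ^ 2 * u)), xx_po]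
    exact po_eq_po rfl (by linarith [hu2]) (by ring) (by ring)
  refine ⟨RingEquiv.ofRingHom (subh u α 0) (subh u (-(u * α)) (2 * α ^ 2 * u)) hfg hgf, ?_, ?_⟩
  · -- ideal condition
    have hσx : (RingEquiv.ofRingHom (subh u α 0) _ hfg hgf).toRingHom (xx 4)
        = mk4 (po 0 u α 0) := subh_xx u α 0
    rw [map_span_xx, hσx]
    apply le_antisymm
    · rw [Ideal.span_le, Set.singleton_subset_iff]
      exact mem_xx_iff.mpr rfl
    · rw [Ideal.span_le, Set.singleton_subset_iff]
      rw [SetLike.mem_coe, Ideal.mem_span_singleton]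
      refine ⟨mk4 (po u (-α) (α ^ 2 * u) 0), ?_⟩
      rw [xx_po, mul_po]
      exact po_eq_po (by ring) (by linarith [hu2]) (by rcases hu with rfl | rfl <;> ring)
        (by rcases hu with rfl | rfl <;> ring)
  · -- intertwining
    intro p
    apply hom_ext
    simp only [RingHom.comp_apply]
    have hσx : (RingEquiv.ofRingHom (subh u α 0) _ hfg hgf).toRingHom (xx 4)
        = mk4 (po 0 u α 0) := subh_xx u α 0
    have hSp : S.ψ p (xx 4) = mk4 (po 0 0 (c p) (d p)) := by rw [hS p, cxx]
    have hSbp : Sb.ψ p (xx 4) = mk4 (po 0 0 (cb p) (db p)) := by rw [hSb p, cxx]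
    rw [hSp, hσx, comp_po hσx, comp_po hSbp]
    refine po_eq_po rfl (by ring) ?_ ?_
    · rcases hu with rfl | rfl <;> ring_nf <;> linarith [hc p]
    · rcases hu with rfl | rfl <;> ring_nf <;> nlinarith [hα p, hc p]

theorem stmt12 :
    (∀ R : AdamsFamily 4, R.ψ P2 (xx 4) ∈ Ideal.span {xx 4 ^ 2} →
      ∀ p : Nat.Primes, ∃ c d : ℤ,
        R.ψ p (xx 4) = (c : TP 4) * xx 4 ^ 2 + (d : TP 4) * xx 4 ^ 3) ∧
    (∀ c d : Nat.Primes → ℤ,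
      (∀ p : Nat.Primes,
        (c p : TP 4) * xx 4 ^ 2 + (d p : TP 4) * xx 4 ^ 3 - xx 4 ^ (p : ℕ)
          ∈ Ideal.span {((p : ℕ) : TP 4)}) →
      ∃ S : AdamsFamily 4, ∀ p : Nat.Primes,
        S.ψ p (xx 4) = (c p : TP 4) * xx 4 ^ 2 + (d p : TP 4) * xx 4 ^ 3) ∧
    (∀ (c d cb db : Nat.Primes → ℤ) (S Sb : AdamsFamily 4),
      (∀ p : Nat.Primes, S.ψ p (xx 4) = (c p : TP 4) * xx 4 ^ 2 + (d p : TP 4) * xx 4 ^ 3) →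
      (∀ p : Nat.Primes, Sb.ψ p (xx 4) = (cb p : TP 4) * xx 4 ^ 2 + (db p : TP 4) * xx 4 ^ 3) →
      (AdamsIso S Sb ↔
        (∃ u : ℤ, (u = 1 ∨ u = -1) ∧ ∀ p : Nat.Primes, c p = u * cb p) ∧
        (∃ α : ℤ, ∀ p : Nat.Primes, db p = d p + 2 * c p * α))) := by
  refine ⟨part1, part2, ?_⟩
  intro c d cb db S Sb hS hSb
  constructor
  · exact part3_fwd c d cb db S Sb hS hSb
  · rintro ⟨⟨u, hu, hc⟩, ⟨α, hα⟩⟩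
    exact part3_bwd c d cb db S Sb hS hSb u hu hc α hα
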